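/- arXiv:math/0612547 — 2 statements merged into one kernel-verified Lean document; each statement's English description precedes it below -/
import Mathlib

section
/- Let A : ℂ^n → ℂ^n be a unitary linear map, let z₁, w, v ∈ ℂ^n, and let k > 0 be a real number. Then i·√k·(ω₀(w,z₁) − ω₀(v,z₁)) + k·ψ₂(A z₁ + (1/√k)·A w, z₁ + (1/√k)·v) = k·⟪A z₁ − z₁, z₁⟫ + √k·(⟪w, A⁻¹ z₁ − z₁⟫ + ⟪A z₁ − z₁, v⟫) + ψ₂(A w, v). -/
/-- The standard Hermitian inner product on `ℂ^n`, linear in the **first** variable: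
`⟪a, b⟫ = ∑ j, a j * conj (b j)`. -/
noncomputable def herm {n : ℕ} (a b : EuclideanSpace ℂ (Fin n)) : ℂ :=
  inner ℂ b a

/-- The standard symplectic form `ω₀(a, b) = - Im ⟪a, b⟫` on `ℂ^n`. -/
noncomputable def omega0 {n : ℕ} (a b : EuclideanSpace ℂ (Fin n)) : ℝ :=
  - (herm a b).im

/-- `ψ₂(a, b) = ⟪a, b⟫ - (‖a‖² + ‖b‖²)/2`. -/
noncomputable def psi2 {n : ℕ} (a b : EuclideanSpace ℂ (Fin n)) : ℂ :=
  herm a b - (1 / 2 : ℂ) * ((‖a‖ : ℂ) ^ 2 + (‖b‖ : ℂ) ^ 2)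

theorem phase_identity_linear_case {n : ℕ}
    (A : EuclideanSpace ℂ (Fin n) ≃ₗᵢ[ℂ] EuclideanSpace ℂ (Fin n))
    (z₁ w v : EuclideanSpace ℂ (Fin n)) (k : ℝ) (hk : 0 < k) :
    Complex.I * (Real.sqrt k : ℂ) * ((omega0 w z₁ - omega0 v z₁ : ℝ) : ℂ)
        + (k : ℂ) * psi2 (A z₁ + ((Real.sqrt k : ℂ))⁻¹ • A w)
            (z₁ + ((Real.sqrt k : ℂ))⁻¹ • v)
      = (k : ℂ) * herm (A z₁ - z₁) z₁
        + (Real.sqrt k : ℂ) * (herm w (A.symm z₁ - z₁) + herm (A z₁ - z₁) v)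
        + psi2 (A w) v := by
  have hs0 : Real.sqrt k ≠ 0 := by positivity
  have hs : (Real.sqrt k : ℂ) ≠ 0 := by exact_mod_cast hs0
  have hk2 : (k : ℂ) = (Real.sqrt k : ℂ) * (Real.sqrt k : ℂ) := by
    rw [← Complex.ofReal_mul, Real.mul_self_sqrt hk.le]
  have hsymm : (inner ℂ (A.symm z₁) w : ℂ) = inner ℂ z₁ (A w) := by
    rw [← A.inner_map_map (A.symm z₁) w, A.apply_symm_apply]
  have hnorm : ∀ x : EuclideanSpace ℂ (Fin n), ((‖x‖ : ℂ)) ^ 2 = inner ℂ x x :=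
    fun x => (inner_self_eq_norm_sq_to_K x).symm
  simp only [herm, omega0, psi2, hnorm, neg_sub_neg, Complex.ofReal_sub,
    Complex.im_eq_sub_conj, inner_conj_symm, inner_add_left, inner_add_right,
    inner_sub_left, inner_sub_right, inner_smul_left, inner_smul_right,
    map_inv₀, Complex.conj_ofReal, A.inner_map_map, hsymm, hk2]
  set s := (Real.sqrt k : ℂ)
  set a1 := (inner ℂ z₁ (A z₁) : ℂ)
  set a2 := (inner ℂ z₁ z₁ : ℂ)
  set a3 := (inner ℂ z₁ w : ℂ)
  set a4 := (inner ℂ w z₁ : ℂ)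
  set a5 := (inner ℂ z₁ v : ℂ)
  set a6 := (inner ℂ v z₁ : ℂ)
  set a7 := (inner ℂ v (A w) : ℂ)
  set a8 := (inner ℂ z₁ (A w) : ℂ)
  set a9 := (inner ℂ v (A z₁) : ℂ)
  set a10 := (inner ℂ w w : ℂ)
  set a11 := (inner ℂ v v : ℂ)
  ring_nf
  rw [Complex.inv_I]
  linear_combination (((-1/2 : ℂ)*(a5+a6+a3+a4) + a9 + a8) * s
      + (a7 - (1/2)*a10 - (1/2)*a11) * (s*s⁻¹ + 1)) * mul_inv_cancel₀ hs
    + ((-1/2 : ℂ)*s*(a5 - a6 - a3 + a4)) * Complex.I_sq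
end

section
/- Let V ⊆ ℂ^n be a real-linear subspace on which ω₀ vanishes identically (equivalently, V and iV are orthogonal for the real inner product Re⟪·,·⟫), and let H be the Hermitian orthogonal complement of V + iV in ℂ^n. Suppose w, v ∈ ℂ^n are decomposed as w = w_h + w_v + w_t and v = v_h + v_v + v_t with w_h, v_h ∈ H, w_v, v_v ∈ V, and w_t, v_t ∈ iV. Then for every ν ∈ V: ψ₂(w − ν, v) + i·ω₀(ν, w) = ψ₂(w_h, v_h) − ½‖w_t − v_t‖² − ½‖w_v − ν − v_v‖² − i·ω₀(w_v − ν − v_v, w_t + v_t) + i·(ω₀(w_v, w_t) − ω₀(v_v, v_t)). -/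
variable {n : ℕ}

lemma herm_add_left (a b c : EuclideanSpace ℂ (Fin n)) : herm (a+b) c = herm a c + herm b c := inner_add_right c a b
lemma herm_add_right (a b c : EuclideanSpace ℂ (Fin n)) : herm a (b+c) = herm a b + herm a c := inner_add_left b c a
lemma herm_sub_left (a b c : EuclideanSpace ℂ (Fin n)) : herm (a-b) c = herm a c - herm b c := inner_sub_right c a b
lemma herm_sub_right (a b c : EuclideanSpace ℂ (Fin n)) : herm a (b-c) = herm a b - herm a c := inner_sub_left b c a
lemma herm_I_left (a b : EuclideanSpace ℂ (Fin n)) : herm (Complex.I • a) b = Complex.I * herm a b := inner_smul_right b a Complex.I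
lemma herm_I_right (a b : EuclideanSpace ℂ (Fin n)) : herm a (Complex.I • b) = -Complex.I * herm a b := by
  simp [herm, inner_smul_left, Complex.conj_I, mul_comm]
lemma herm_conj (a b : EuclideanSpace ℂ (Fin n)) : herm b a = starRingEnd ℂ (herm a b) := (inner_conj_symm a b).symm
lemma herm_self (a : EuclideanSpace ℂ (Fin n)) : herm a a = (‖a‖ : ℂ) ^ 2 := inner_self_eq_norm_sq_to_K a

/-- The key algebraic decomposition `T_h + T_t + T_v + T_vt` of the exponent in the proof of
the equivariant scaling asymptotics.  Here `V` is an isotropic real subspace of `ℂ^n`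
(the tangent space to the group orbit), `iV` its image under multiplication by `i`
(the transverse space), and the horizontal components `w_h, v_h` are Hermitian-orthogonal
to `V + iV`. -/
theorem exponent_decomposition {n : ℕ}
    (V : Submodule ℝ (EuclideanSpace ℂ (Fin n)))
    (hV : ∀ a ∈ V, ∀ b ∈ V, omega0 a b = 0)
    (w v wh vh wv vv wt vt : EuclideanSpace ℂ (Fin n))
    (hwh : ∀ u ∈ V, herm wh u = 0 ∧ herm wh (Complex.I • u) = 0)
    (hvh : ∀ u ∈ V, herm vh u = 0 ∧ herm vh (Complex.I • u) = 0)
    (hwv : wv ∈ V) (hvv : vv ∈ V)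
    (hwt : ∃ u ∈ V, wt = Complex.I • u) (hvt : ∃ u ∈ V, vt = Complex.I • u)
    (hw : w = wh + wv + wt) (hv : v = vh + vv + vt)
    (ν : EuclideanSpace ℂ (Fin n)) (hν : ν ∈ V) :
    psi2 (w - ν) v + Complex.I * ((omega0 ν w : ℝ) : ℂ)
      = psi2 wh vh - (1 / 2 : ℂ) * (‖wt - vt‖ : ℂ) ^ 2
        - (1 / 2 : ℂ) * (‖wv - ν - vv‖ : ℂ) ^ 2
        - Complex.I * ((omega0 (wv - ν - vv) (wt + vt) : ℝ) : ℂ)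
        + Complex.I * ((omega0 wv wt - omega0 vv vt : ℝ) : ℂ) := by
  obtain ⟨s, hs, rfl⟩ := hwt
  obtain ⟨t, ht, rfl⟩ := hvt
  subst hw hv
  have him : ∀ p ∈ V, ∀ q ∈ V, (herm p q).im = 0 := by
    intro p hp q hq
    have := hV p hp q hq
    simpa [omega0] using this
  have hsym : ∀ p ∈ V, ∀ q ∈ V, herm q p = herm p q := by
    intro p hp q hq
    rw [herm_conj, Complex.conj_eq_iff_im.2 (him p hp q hq)]
  have hre : ∀ p ∈ V, ∀ q ∈ V, (((herm p q).re : ℝ) : ℂ) = herm p q := by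
    intro p hp q hq
    have h := him p hp q hq
    exact Complex.ext (by simp) (by simp [h])
  have hwh0 : ∀ u ∈ V, herm wh u = 0 := fun u hu => (hwh u hu).1
  have hvh0 : ∀ u ∈ V, herm vh u = 0 := fun u hu => (hvh u hu).1
  have hwh0' : ∀ u ∈ V, herm u wh = 0 := fun u hu => by
    rw [herm_conj]; simp [hwh0 u hu]
  have hvh0' : ∀ u ∈ V, herm u vh = 0 := fun u hu => by
    rw [herm_conj]; simp [hvh0 u hu]
  simp only [psi2, omega0, ← herm_self]
  simp only [herm_add_left, herm_add_right, herm_sub_left, herm_sub_right,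
    herm_I_left, herm_I_right,
    hwh0 _ hwv, hwh0 _ hvv, hwh0 _ hν, hwh0 _ hs, hwh0 _ ht,
    hvh0 _ hwv, hvh0 _ hvv, hvh0 _ hν, hvh0 _ hs, hvh0 _ ht,
    hwh0' _ hwv, hwh0' _ hvv, hwh0' _ hν, hwh0' _ hs, hwh0' _ ht,
    hvh0' _ hwv, hvh0' _ hvv, hvh0' _ hν, hvh0' _ hs, hvh0' _ ht]
  simp only [Complex.add_im, Complex.sub_im, Complex.neg_im, Complex.mul_im,
    Complex.I_re, Complex.I_im, Complex.neg_re, Complex.zero_im, Complex.add_re, Complex.sub_re, Complex.zero_re,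
    him _ hwv _ hvv, him _ hwv _ hν, him _ hwv _ hs, him _ hwv _ ht,
    him _ hν _ hwv, him _ hν _ hvv, him _ hν _ hs, him _ hν _ ht,
    him _ hvv _ hwv, him _ hvv _ hν, him _ hvv _ hs, him _ hvv _ ht,
    him _ hs _ hwv, him _ hs _ hν, him _ hs _ hvv, him _ hs _ ht,
    him _ ht _ hwv, him _ ht _ hν, him _ ht _ hvv, him _ ht _ hs]
  push_cast
  simp only [hre _ hwv _ hvv, hre _ hwv _ hν, hre _ hwv _ hs, hre _ hwv _ ht,
    hre _ hν _ hwv, hre _ hν _ hvv, hre _ hν _ hs, hre _ hν _ ht,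
    hre _ hvv _ hwv, hre _ hvv _ hν, hre _ hvv _ hs, hre _ hvv _ ht,
    hre _ hs _ hwv, hre _ hs _ hν, hre _ hs _ hvv, hre _ hs _ ht,
    hre _ ht _ hwv, hre _ ht _ hν, hre _ ht _ hvv, hre _ ht _ hs]
  simp only [hsym _ hwv _ hν, hsym _ hwv _ hvv, hsym _ hwv _ hs, hsym _ hwv _ ht,
    hsym _ hν _ hvv, hsym _ hν _ hs, hsym _ hν _ ht,
    hsym _ hvv _ hs, hsym _ hvv _ ht, hsym _ hs _ ht]
  ring
end
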